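/- arXiv:1507.06866 — 2 statements merged into one kernel-verified Lean document; each statement's English description precedes it below -/
import Mathlib

section
/- For positive integers n_i and f_i: if f_i ≤ n_i then n_i·log((n_i+f_i)/n_i) ≤ n_i·log 2 = n_i; if f_i > n_i then n_i·log((n_i+f_i)/n_i) ≤ n_i·(log(f_i/n_i) + 1). Consequently, if ∑_i n_i ≤ n and ∑_i f_i ≤ n, then ∑_i n_i·log((n_i+f_i)/n_i) ≤ 2n + ∑_{i: f_i>n_i} n_i log(f_i/n_i) ≤ 2n + n·(log e)/e = O(n). -/
open scoped BigOperators Classical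

lemma aux_nlog (a b : ℝ) (ha : 0 < a) (hb : 0 < b) :
    a * Real.log (b / a) ≤ b / Real.exp 1 := by
  have he : (0:ℝ) < Real.exp 1 := Real.exp_pos 1
  have h1 : Real.log (b / (a * Real.exp 1)) ≤ b / (a * Real.exp 1) - 1 :=
    Real.log_le_sub_one_of_pos (by positivity)
  have h2 : Real.log (b / a) = Real.log (b / (a * Real.exp 1)) + 1 := by
    rw [Real.log_div hb.ne' ha.ne', Real.log_div hb.ne' (by positivity : (a * Real.exp 1) ≠ 0),
      Real.log_mul ha.ne' he.ne', Real.log_exp]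
    ring
  have h3 : Real.log (b / a) ≤ b / (a * Real.exp 1) := by linarith
  calc a * Real.log (b / a) ≤ a * (b / (a * Real.exp 1)) :=
        mul_le_mul_of_nonneg_left h3 ha.le
    _ = b / Real.exp 1 := by field_simp


/-- for positive integers `n_i`, `f_i`: if `f_i ≤ n_i` then
`n_i·log₂((n_i+f_i)/n_i) ≤ n_i`; if `f_i > n_i` then
`n_i·log₂((n_i+f_i)/n_i) ≤ n_i·(log₂(f_i/n_i) + 1)`. Consequently, if `∑ n_i ≤ n` and
`∑ f_i ≤ n` then `∑_i n_i·log₂((n_i+f_i)/n_i) ≤ 2n + ∑_{f_i>n_i} n_i log₂(f_i/n_i)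
≤ 2n + n·(log₂ e)/e`. -/
theorem context_growth {ι : Type*} [Fintype ι] (ni fi : ι → ℕ) (n : ℝ)
    (hni : ∀ i, 0 < ni i) (hfi : ∀ i, 0 < fi i)
    (hn1 : (∑ i, (ni i : ℝ)) ≤ n) (hn2 : (∑ i, (fi i : ℝ)) ≤ n) :
    (∀ i, fi i ≤ ni i →
        (ni i : ℝ) * Real.logb 2 (((ni i : ℝ) + fi i) / ni i) ≤ (ni i : ℝ))
    ∧ (∀ i, ni i < fi i →
        (ni i : ℝ) * Real.logb 2 (((ni i : ℝ) + fi i) / ni i)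
          ≤ (ni i : ℝ) * (Real.logb 2 ((fi i : ℝ) / ni i) + 1))
    ∧ (∑ i, (ni i : ℝ) * Real.logb 2 (((ni i : ℝ) + fi i) / ni i))
        ≤ 2 * n + ∑ i ∈ Finset.univ.filter (fun i => ni i < fi i),
            (ni i : ℝ) * Real.logb 2 ((fi i : ℝ) / ni i)
    ∧ (2 * n + ∑ i ∈ Finset.univ.filter (fun i => ni i < fi i),
            (ni i : ℝ) * Real.logb 2 ((fi i : ℝ) / ni i))
        ≤ 2 * n + n * Real.logb 2 (Real.exp 1) / Real.exp 1 := by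
  have hniR : ∀ i, (0:ℝ) < ni i := fun i => by exact_mod_cast hni i
  have hfiR : ∀ i, (0:ℝ) < fi i := fun i => by exact_mod_cast hfi i
  have hnpos : (0:ℝ) ≤ n := by
    refine le_trans ?_ hn1
    exact Finset.sum_nonneg fun i _ => (hniR i).le
  -- Part 1
  have P1 : ∀ i, fi i ≤ ni i →
      (ni i : ℝ) * Real.logb 2 (((ni i : ℝ) + fi i) / ni i) ≤ (ni i : ℝ) := by
    intro i h
    have hle : ((ni i : ℝ) + fi i) / ni i ≤ 2 := by
      rw [div_le_iff₀ (hniR i)]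
      have : (fi i : ℝ) ≤ ni i := by exact_mod_cast h
      linarith
    have hlog : Real.logb 2 (((ni i : ℝ) + fi i) / ni i) ≤ 1 := by
      have hp : (0:ℝ) < ((ni i : ℝ) + fi i) / ni i :=
        div_pos (by linarith [hniR i, hfiR i]) (hniR i)
      calc Real.logb 2 (((ni i : ℝ) + fi i) / ni i) ≤ Real.logb 2 2 :=
            (Real.logb_le_logb (by norm_num) hp (by norm_num)).mpr hle
        _ = 1 := Real.logb_self_eq_one (by norm_num)
    nlinarith [hniR i]
  -- Part 2
  have P2 : ∀ i, ni i < fi i →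
      (ni i : ℝ) * Real.logb 2 (((ni i : ℝ) + fi i) / ni i)
        ≤ (ni i : ℝ) * (Real.logb 2 ((fi i : ℝ) / ni i) + 1) := by
    intro i h
    have hR : (ni i : ℝ) < fi i := by exact_mod_cast h
    have hle : ((ni i : ℝ) + fi i) / ni i ≤ 2 * ((fi i : ℝ) / ni i) := by
      rw [div_le_iff₀ (hniR i), mul_assoc, div_mul_cancel₀ _ (hniR i).ne']
      linarith
    have hpos : (0:ℝ) < ((ni i : ℝ) + fi i) / ni i :=
      div_pos (by linarith [hniR i, hfiR i]) (hniR i)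
    have hlog : Real.logb 2 (((ni i : ℝ) + fi i) / ni i)
        ≤ Real.logb 2 ((fi i : ℝ) / ni i) + 1 := by
      calc Real.logb 2 (((ni i : ℝ) + fi i) / ni i)
          ≤ Real.logb 2 (2 * ((fi i : ℝ) / ni i)) :=
            (Real.logb_le_logb (by norm_num) hpos (mul_pos two_pos (div_pos (hfiR i) (hniR i)))).mpr hle
        _ = Real.logb 2 ((fi i : ℝ) / ni i) + 1 := by
            rw [Real.logb_mul (by norm_num) (div_pos (hfiR i) (hniR i)).ne',
              Real.logb_self_eq_one (by norm_num)]
            ring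
    exact mul_le_mul_of_nonneg_left hlog (hniR i).le
  refine ⟨P1, P2, ?_, ?_⟩
  · -- Part 3
    have key : ∀ i, (ni i : ℝ) * Real.logb 2 (((ni i : ℝ) + fi i) / ni i)
        ≤ (ni i : ℝ) + (if ni i < fi i then (ni i : ℝ) * Real.logb 2 ((fi i : ℝ) / ni i) else 0) := by
      intro i
      by_cases h : ni i < fi i
      · simp only [h, if_pos]
        have := P2 i h
        nlinarith
      · simp only [h, if_neg, not_false_iff, add_zero]
        exact P1 i (le_of_not_gt h)
    calc (∑ i, (ni i : ℝ) * Real.logb 2 (((ni i : ℝ) + fi i) / ni i))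
        ≤ ∑ i, ((ni i : ℝ) + (if ni i < fi i then (ni i : ℝ) * Real.logb 2 ((fi i : ℝ) / ni i) else 0)) :=
          Finset.sum_le_sum fun i _ => key i
      _ = (∑ i, (ni i : ℝ)) + ∑ i ∈ Finset.univ.filter (fun i => ni i < fi i),
            (ni i : ℝ) * Real.logb 2 ((fi i : ℝ) / ni i) := by
          rw [Finset.sum_add_distrib, ← Finset.sum_filter]
      _ ≤ 2 * n + ∑ i ∈ Finset.univ.filter (fun i => ni i < fi i),
            (ni i : ℝ) * Real.logb 2 ((fi i : ℝ) / ni i) := by linarith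
  · -- Part 4
    have he : (0:ℝ) < Real.exp 1 := Real.exp_pos 1
    have hl2 : (0:ℝ) < Real.log 2 := Real.log_pos (by norm_num)
    have key : ∀ i, (ni i : ℝ) * Real.logb 2 ((fi i : ℝ) / ni i)
        ≤ (fi i : ℝ) * Real.logb 2 (Real.exp 1) / Real.exp 1 := by
      intro i
      have h := aux_nlog (ni i) (fi i) (hniR i) (hfiR i)
      rw [Real.logb, Real.logb, Real.log_exp]
      rw [mul_div_assoc, ← mul_div_assoc ((ni i : ℝ))]
      calc (ni i : ℝ) * Real.log ((fi i : ℝ) / ni i) / Real.log 2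
          ≤ ((fi i : ℝ) / Real.exp 1) / Real.log 2 :=
            div_le_div_of_nonneg_right h hl2.le
        _ = (fi i : ℝ) * ((1:ℝ) / Real.log 2 / Real.exp 1) := by ring
    have hsum : (∑ i ∈ Finset.univ.filter (fun i => ni i < fi i),
        (ni i : ℝ) * Real.logb 2 ((fi i : ℝ) / ni i))
        ≤ ∑ i ∈ Finset.univ.filter (fun i => ni i < fi i),
          (fi i : ℝ) * Real.logb 2 (Real.exp 1) / Real.exp 1 :=
      Finset.sum_le_sum fun i _ => key i
    have hsum2 : (∑ i ∈ Finset.univ.filter (fun i => ni i < fi i),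
        (fi i : ℝ) * Real.logb 2 (Real.exp 1) / Real.exp 1)
        ≤ n * Real.logb 2 (Real.exp 1) / Real.exp 1 := by
      have hc : (0:ℝ) ≤ Real.logb 2 (Real.exp 1) / Real.exp 1 := by
        apply div_nonneg _ he.le
        rw [Real.logb, Real.log_exp]
        positivity
      calc (∑ i ∈ Finset.univ.filter (fun i => ni i < fi i),
            (fi i : ℝ) * Real.logb 2 (Real.exp 1) / Real.exp 1)
          = (∑ i ∈ Finset.univ.filter (fun i => ni i < fi i), (fi i : ℝ))
              * (Real.logb 2 (Real.exp 1) / Real.exp 1) := by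
            rw [Finset.sum_mul]; congr 1; ext i; ring
        _ ≤ n * (Real.logb 2 (Real.exp 1) / Real.exp 1) := by
            apply mul_le_mul_of_nonneg_right _ hc
            refine le_trans ?_ hn2
            exact Finset.sum_le_sum_of_subset_of_nonneg (Finset.filter_subset _ _)
              (fun i _ _ => (hfiR i).le)
        _ = n * Real.logb 2 (Real.exp 1) / Real.exp 1 := by ring
    linarith
end

section
/- Let S be a string of length n over alphabet Σ, |Σ| = σ, and let S^M be the string of length ⌈n/ℓ⌉ over Σ^ℓ obtained by grouping consecutive blocks of ℓ symbols (assuming ℓ divides n). Then (n/ℓ)·H_0(S^M) ≤ n·H_k(S) + (n/ℓ)·k·log σ simultaneously for all k ≤ ℓ. -/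
open scoped BigOperators

/-- Zeroth-order empirical entropy `H0 S = ∑_a (n_a/n) log₂(n/n_a)`. -/
noncomputable def H0 {α : Type*} [DecidableEq α] (S : List α) : ℝ :=
  ∑ a ∈ S.toFinset,
    ((S.count a : ℝ) / S.length) * Real.logb 2 ((S.length : ℝ) / S.count a)

/-- The subsequence of symbols of `S` immediately following an occurrence of context `A`. -/
def ctxSub {α : Type*} [DecidableEq α] (S A : List α) : List α :=
  (List.range S.length).filterMap (fun j =>
    if (S.drop j).take A.length = A then (S.drop (j + A.length)).head? else none)

/-- `|S| · H_k(S) = ∑_{A ∈ Σ^k} |S_A| · H0(S_A)`. -/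
noncomputable def nHk {σ : ℕ} (k : ℕ) (S : List (Fin σ)) : ℝ :=
  ∑ A : Fin k → Fin σ,
    ((ctxSub S (List.ofFn A)).length : ℝ) * H0 (ctxSub S (List.ofFn A))

namespace FVaux

/-! ### chunk structure -/



/-- fueled model of `toChunks` -/
def chunksM {α : Type*} : ℕ → ℕ → List α → List (List α)
  | 0, _, _ => []
  | _ + 1, _, [] => []
  | m + 1, ℓ, (x :: xs) => (x :: xs).take ℓ :: chunksM m ℓ ((x :: xs).drop ℓ)

theorem chunksM_eq {α : Type*} {ℓ : ℕ} (hℓ : 0 < ℓ) :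
    ∀ (m : ℕ) (l : List α), l.length ≤ m → chunksM m ℓ l = chunksM l.length ℓ l := by
  intro m
  induction m using Nat.strong_induction_on with
  | _ m ih =>
    intro l hl
    cases m with
    | zero =>
      have : l = [] := List.eq_nil_of_length_eq_zero (by omega)
      subst this; rfl
    | succ m =>
      cases l with
      | nil => rfl
      | cons x xs =>
        have hd : ((x :: xs).drop ℓ).length ≤ xs.length := by
          rw [List.length_drop]; simp; omega
        simp only [List.length_cons, chunksM]
        congr 1
        rw [ih m (Nat.lt_succ_self m) _ (le_trans hd (by simp at hl; omega)),
          ih xs.length (by simp at hl; omega) _ hd]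

theorem chunksM_fuel {α : Type*} {ℓ : ℕ} (hℓ : 0 < ℓ) (m₁ m₂ : ℕ) (l : List α)
    (h1 : l.length ≤ m₁) (h2 : l.length ≤ m₂) : chunksM m₁ ℓ l = chunksM m₂ ℓ l := by
  rw [chunksM_eq hℓ _ _ h1, chunksM_eq hℓ _ _ h2]

theorem go_spec {α : Type*} {ℓ : ℕ} (hℓ : 0 < ℓ) :
    ∀ (xs : List α) (acc₁ : Array α) (acc₂ : Array (List α)),
      0 < acc₁.size → acc₁.size ≤ ℓ →
      List.toChunks.go ℓ xs acc₁ acc₂ =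
        acc₂.toList ++ (acc₁.toList ++ xs.take (ℓ - acc₁.size)) ::
          chunksM xs.length ℓ (xs.drop (ℓ - acc₁.size)) := by
  intro xs
  induction xs with
  | nil => intro acc₁ acc₂ _ _; simp [List.toChunks.go, chunksM]
  | cons x xs ih =>
    intro acc₁ acc₂ hpos hle
    rw [List.toChunks.go]
    by_cases h : acc₁.size = ℓ
    · simp only [h, beq_self_eq_true, if_true]
      rw [ih _ _ (by simp) (by simp; omega)]
      have hstep : chunksM (xs.length + 1) ℓ (x :: xs) =
          ((x :: xs).take ℓ) :: chunksM xs.length ℓ ((x :: xs).drop ℓ) := by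
        simp only [chunksM]
      have htake : (x :: xs).take ℓ = x :: xs.take (ℓ - 1) := by
        cases ℓ with | zero => omega | succ n => simp
      have hdrop : (x :: xs).drop ℓ = xs.drop (ℓ - 1) := by
        cases ℓ with | zero => omega | succ n => simp
      simp [hstep, htake, hdrop]
    · have hlt : acc₁.size < ℓ := lt_of_le_of_ne hle h
      simp only [beq_iff_eq, h, if_false]
      rw [ih _ _ (by simp) (by simp; omega)]
      have h1 : ℓ - (acc₁.push x).size = ℓ - acc₁.size - 1 := by simp; omega
      have h2 : (x :: xs).take (ℓ - acc₁.size) = x :: xs.take (ℓ - acc₁.size - 1) := by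
        cases hh : ℓ - acc₁.size with | zero => omega | succ n => simp
      have h3 : (x :: xs).drop (ℓ - acc₁.size) = xs.drop (ℓ - acc₁.size - 1) := by
        cases hh : ℓ - acc₁.size with | zero => omega | succ n => simp
      rw [h1, h2, h3]
      simp only [Array.toList_push, List.length_cons]
      rw [chunksM_fuel hℓ xs.length (xs.length + 1) _
        (by rw [List.length_drop]; omega) (by rw [List.length_drop]; omega)]
      simp

theorem toChunks_eq_chunksM {α : Type*} {ℓ : ℕ} (hℓ : 0 < ℓ) (l : List α) :
    l.toChunks ℓ = chunksM l.length ℓ l := by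
  cases l with
  | nil => cases ℓ <;> rfl
  | cons x xs =>
    cases ℓ with
    | zero => omega
    | succ n =>
      show List.toChunks.go (n+1) xs #[x] #[] = _
      rw [go_spec (by omega) xs #[x] #[] (by simp) (by simp)]
      have hstep : chunksM (x :: xs).length (n+1) (x :: xs)
          = ((x::xs).take (n+1)) :: chunksM xs.length (n+1) ((x::xs).drop (n+1)) := by
        simp only [List.length_cons, chunksM]
      rw [hstep]
      simp

theorem chunksM_closed {α : Type*} {ℓ : ℕ} (hℓ : 0 < ℓ) :
    ∀ (m : ℕ) (l : List α), l.length = m * ℓ →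
      chunksM l.length ℓ l = (List.range m).map (fun i => (l.drop (i * ℓ)).take ℓ) := by
  intro m
  induction m with
  | zero => intro l hl; simp at hl; simp [hl, chunksM]
  | succ m ih =>
    intro l hl
    have hne : l ≠ [] := by intro h; subst h; simp at hl; omega
    obtain ⟨x, xs, rfl⟩ := List.exists_cons_of_ne_nil hne
    simp only [List.length_cons, chunksM]
    have hdl : ((x :: xs).drop ℓ).length = m * ℓ := by
      rw [List.length_drop]; simp at hl ⊢; rw [Nat.succ_mul] at hl; omega
    rw [chunksM_fuel hℓ xs.length ((x :: xs).drop ℓ).length _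
      (by rw [List.length_drop]; simp; omega) le_rfl]
    rw [ih ((x :: xs).drop ℓ) hdl]
    rw [List.range_succ_eq_map]
    simp only [List.map_cons, List.map_map]
    congr 1
    · simp
    · apply List.map_congr_left
      intro i _
      simp only [Function.comp_apply, List.drop_drop]
      congr 1
      simp [Nat.succ_eq_add_one]
      ring_nf

theorem toChunks_closed {α : Type*} {ℓ : ℕ} (hℓ : 0 < ℓ) (l : List α) (hdvd : ℓ ∣ l.length) :
    l.toChunks ℓ = (List.range (l.length / ℓ)).map (fun i => (l.drop (i * ℓ)).take ℓ) := by
  rw [toChunks_eq_chunksM hℓ]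
  exact chunksM_closed hℓ _ l (by rw [Nat.div_mul_cancel hdvd])



/-! ### probability model -/

variable {σ : ℕ}

/-- empirical conditional probability of `a` after context `A`. -/
noncomputable def pf (S A : List (Fin σ)) (a : Fin σ) : ℝ :=
  ((ctxSub S A).count a : ℝ) / ((ctxSub S A).length : ℝ)

/-- product of conditional probabilities along a word `r` after initial context `A`. -/
noncomputable def W (S : List (Fin σ)) : List (Fin σ) → List (Fin σ) → ℝ
  | _, [] => 1
  | A, a :: r => pf S A a * W S ((A ++ [a]).drop 1) r

/-- per-position codelength `g S k p`. -/
noncomputable def g (S : List (Fin σ)) (k p : ℕ) : ℝ :=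
  ((S.drop (p + k)).head?).elim 0 fun a =>
    Real.logb 2 (((ctxSub S ((S.drop p).take k)).length : ℝ) /
      ((ctxSub S ((S.drop p).take k)).count a : ℝ))

theorem pf_nonneg (S A : List (Fin σ)) (a : Fin σ) : 0 ≤ pf S A a := by
  unfold pf; positivity

theorem sum_count_eq_length (l : List (Fin σ)) : ∑ a : Fin σ, l.count a = l.length := by
  induction l with
  | nil => simp
  | cons x t ih =>
    simp only [List.count_cons, Finset.sum_add_distrib, ih, List.length_cons]
    congr 1
    simp [Finset.sum_ite_eq]

theorem sum_pf_le_one (S A : List (Fin σ)) : ∑ a : Fin σ, pf S A a ≤ 1 := by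
  unfold pf
  rw [← Finset.sum_div]
  have h : ∑ a : Fin σ, ((ctxSub S A).count a : ℝ) = ((ctxSub S A).length : ℝ) := by
    exact_mod_cast congrArg (Nat.cast : ℕ → ℝ) (sum_count_eq_length (ctxSub S A))
  rw [h]
  rcases eq_or_ne ((ctxSub S A).length : ℝ) 0 with h0 | h0
  · simp [h0]
  · rw [div_self h0]

theorem W_nonneg (S : List (Fin σ)) : ∀ (r A : List (Fin σ)), 0 ≤ W S A r := by
  intro r
  induction r with
  | nil => intro A; simp [W]
  | cons a r ih => intro A; simp only [W]; exact mul_nonneg (pf_nonneg _ _ _) (ih _)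

theorem W_sum_le_one (S : List (Fin σ)) :
    ∀ (t : ℕ) (A : List (Fin σ)), ∑ v : Fin t → Fin σ, W S A (List.ofFn v) ≤ 1 := by
  intro t
  induction t with
  | zero =>
    intro A
    simp [W, List.ofFn_zero]
  | succ t ih =>
    intro A
    rw [← Equiv.sum_comp (Fin.consEquiv (fun _ => Fin σ))
      (fun v => W S A (List.ofFn v)), Fintype.sum_prod_type]
    have hstep : ∀ (a : Fin σ) (w : Fin t → Fin σ),
        W S A (List.ofFn (Fin.consEquiv (fun _ => Fin σ) (a, w)))
          = pf S A a * W S ((A ++ [a]).drop 1) (List.ofFn w) := by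
      intro a w
      have : List.ofFn (Fin.consEquiv (fun _ => Fin σ) (a, w)) = a :: List.ofFn w := by
        rw [List.ofFn_succ]
        simp [Fin.consEquiv]
      rw [this, W]
    calc ∑ a : Fin σ, ∑ w : Fin t → Fin σ,
          W S A (List.ofFn (Fin.consEquiv (fun _ => Fin σ) (a, w)))
        = ∑ a : Fin σ, pf S A a * ∑ w : Fin t → Fin σ,
            W S ((A ++ [a]).drop 1) (List.ofFn w) := by
          refine Finset.sum_congr rfl fun a _ => ?_
          rw [Finset.mul_sum]
          exact Finset.sum_congr rfl fun w _ => hstep a w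
      _ ≤ ∑ a : Fin σ, pf S A a * 1 := by
          refine Finset.sum_le_sum fun a _ => ?_
          exact mul_le_mul_of_nonneg_left (ih _) (pf_nonneg _ _ _)
      _ ≤ 1 := by
          simp only [mul_one]
          exact sum_pf_le_one S A


/-! ### Gibbs' inequality -/

theorem gibbs {α : Type*} [DecidableEq α] (L : List α) (q : α → ℝ)
    (hq : ∀ a ∈ L.toFinset, 0 < q a) (hsum : ∑ a ∈ L.toFinset, q a ≤ 1) :
    (L.length : ℝ) * H0 L ≤ ((L.map (fun a => Real.logb 2 (1 / q a))).sum) := by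
  have hconv : ((L.map (fun a => Real.logb 2 (1 / q a))).sum)
      = ∑ a ∈ L.toFinset, (L.count a : ℝ) * Real.logb 2 (1 / q a) := by
    rw [Finset.sum_list_map_count]
    exact Finset.sum_congr rfl fun a _ => nsmul_eq_mul _ _
  rw [hconv]
  rcases eq_or_ne L [] with rfl | hL
  · simp [H0]
  have hn : 0 < L.length := List.length_pos_iff.2 hL
  have hnR : (0 : ℝ) < L.length := by exact_mod_cast hn
  have hH : (L.length : ℝ) * H0 L
      = ∑ a ∈ L.toFinset, (L.count a : ℝ) * Real.logb 2 ((L.length : ℝ) / L.count a) := by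
    rw [H0, Finset.mul_sum]
    refine Finset.sum_congr rfl fun a _ => ?_
    field_simp
  rw [hH, ← sub_nonneg, ← Finset.sum_sub_distrib]
  rw [← neg_nonpos, ← Finset.sum_neg_distrib]
  have hlog2 : (0 : ℝ) < Real.log 2 := Real.log_pos one_lt_two
  have key : ∀ a ∈ L.toFinset,
      -((L.count a : ℝ) * Real.logb 2 (1 / q a)
          - (L.count a : ℝ) * Real.logb 2 ((L.length : ℝ) / L.count a))
        ≤ ((L.length : ℝ) * q a - (L.count a : ℝ)) / Real.log 2 := by
    intro a ha
    have hqa : 0 < q a := hq a ha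
    have hca : 0 < (L.count a : ℝ) := by
      exact_mod_cast List.count_pos_iff.2 (List.mem_toFinset.1 ha)
    have h1 : -((L.count a : ℝ) * Real.logb 2 (1 / q a)
        - (L.count a : ℝ) * Real.logb 2 ((L.length : ℝ) / L.count a))
        = (L.count a : ℝ) * Real.logb 2 (((L.length : ℝ) * q a) / L.count a) := by
      rw [neg_sub, ← mul_sub, ← Real.logb_div (by positivity) (by positivity)]
      congr 2
      field_simp
    rw [h1]
    have h2 : Real.logb 2 (((L.length : ℝ) * q a) / L.count a)
        ≤ (((L.length : ℝ) * q a) / L.count a - 1) / Real.log 2 := by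
      rw [Real.logb, div_le_div_iff_of_pos_right hlog2]
      exact Real.log_le_sub_one_of_pos (by positivity)
    calc (L.count a : ℝ) * Real.logb 2 (((L.length : ℝ) * q a) / L.count a)
        ≤ (L.count a : ℝ) * ((((L.length : ℝ) * q a) / L.count a - 1) / Real.log 2) :=
          mul_le_mul_of_nonneg_left h2 hca.le
      _ = ((L.length : ℝ) * q a - (L.count a : ℝ)) / Real.log 2 := by
          field_simp
  calc ∑ a ∈ L.toFinset, -((L.count a : ℝ) * Real.logb 2 (1 / q a)
          - (L.count a : ℝ) * Real.logb 2 ((L.length : ℝ) / L.count a))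
      ≤ ∑ a ∈ L.toFinset, ((L.length : ℝ) * q a - (L.count a : ℝ)) / Real.log 2 :=
        Finset.sum_le_sum key
    _ = ((L.length : ℝ) * (∑ a ∈ L.toFinset, q a)
          - ∑ a ∈ L.toFinset, (L.count a : ℝ)) / Real.log 2 := by
        rw [← Finset.sum_div, Finset.sum_sub_distrib, Finset.mul_sum]
    _ ≤ 0 := by
        apply div_nonpos_of_nonpos_of_nonneg _ hlog2.le
        have hc : ∑ a ∈ L.toFinset, (L.count a : ℝ) = (L.length : ℝ) := by
          exact_mod_cast congrArg (Nat.cast : ℕ → ℝ)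
            (List.sum_toFinset_count_eq_length L)
        rw [hc]
        nlinarith [hsum]

/-! ### per-position lemmas -/

theorem mem_ctxSub_of_head {S : List (Fin σ)} {k p : ℕ} {a : Fin σ}
    (ha : (S.drop (p + k)).head? = some a) : a ∈ ctxSub S ((S.drop p).take k) := by
  have hne : S.drop (p + k) ≠ [] := by
    intro h; rw [h] at ha; simp at ha
  have hplen : p + k < S.length := by
    by_contra h
    exact hne (List.drop_eq_nil_of_le (by omega))
  have hA : ((S.drop p).take k).length = k := by
    rw [List.length_take, List.length_drop]; omega
  unfold ctxSub
  refine List.mem_filterMap.2 ⟨p, List.mem_range.2 (by omega), ?_⟩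
  rw [hA, if_pos rfl]
  exact ha

theorem g_nonneg (S : List (Fin σ)) (k p : ℕ) : 0 ≤ g S k p := by
  unfold g
  cases hh : (S.drop (p + k)).head? with
  | none => simp
  | some a =>
    simp only [Option.elim]
    have hmem := mem_ctxSub_of_head hh
    have hc : 0 < (ctxSub S ((S.drop p).take k)).count a := List.count_pos_iff.2 hmem
    have hcR : (0 : ℝ) < ((ctxSub S ((S.drop p).take k)).count a : ℝ) := by exact_mod_cast hc
    have hl : (ctxSub S ((S.drop p).take k)).count a
        ≤ (ctxSub S ((S.drop p).take k)).length := List.count_le_length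
    apply Real.logb_nonneg one_lt_two
    rw [le_div_iff₀ hcR]
    simpa using (by exact_mod_cast hl : ((ctxSub S ((S.drop p).take k)).count a : ℝ)
      ≤ ((ctxSub S ((S.drop p).take k)).length : ℝ))

theorem list_range_map_sum (n : ℕ) (f : ℕ → ℝ) :
    ((List.range n).map f).sum = ∑ i ∈ Finset.range n, f i := by
  induction n with
  | zero => simp
  | succ n ih => rw [List.range_succ, Finset.sum_range_succ, ← ih]; simp

theorem sum_map_filterMap {β γ : Type*} (l : List β) (F : β → Option γ) (h : γ → ℝ) :
    ((l.filterMap F).map h).sum = (l.map (fun j => ((F j).map h).getD 0)).sum := by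
  induction l with
  | nil => simp
  | cons x t ih => cases hx : F x <;> simp [List.filterMap_cons, hx, ih]

theorem length_mul_H0 {α : Type*} [DecidableEq α] (L : List α) :
    (L.length : ℝ) * H0 L
      = ((L.map (fun a => Real.logb 2 ((L.length : ℝ) / L.count a))).sum) := by
  rcases eq_or_ne L [] with rfl | hL
  · simp [H0]
  have hnR : (0 : ℝ) < L.length := by
    exact_mod_cast List.length_pos_iff.2 hL
  rw [Finset.sum_list_map_count, H0, Finset.mul_sum]
  refine Finset.sum_congr rfl fun a _ => ?_
  rw [nsmul_eq_mul]
  field_simp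


theorem nHk_eq (k : ℕ) (S : List (Fin σ)) :
    nHk k S = ∑ p ∈ Finset.range S.length, g S k p := by
  have hA : ∀ A : Fin k → Fin σ,
      ((ctxSub S (List.ofFn A)).length : ℝ) * H0 (ctxSub S (List.ofFn A))
        = ∑ p ∈ Finset.range S.length,
            (if (S.drop p).take k = List.ofFn A then
              ((S.drop (p + k)).head?).elim 0 (fun a =>
                Real.logb 2 (((ctxSub S (List.ofFn A)).length : ℝ) /
                  ((ctxSub S (List.ofFn A)).count a : ℝ)))
            else 0) := by
    intro A
    have hctx : ctxSub S (List.ofFn A) = (List.range S.length).filterMap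
        (fun j => if (S.drop j).take k = List.ofFn A then (S.drop (j + k)).head? else none) := by
      rw [ctxSub, List.length_ofFn]
    have hAstep : ∀ (h : Fin σ → ℝ), ((ctxSub S (List.ofFn A)).map h).sum
        = ∑ p ∈ Finset.range S.length,
            (if (S.drop p).take k = List.ofFn A then
              ((S.drop (p + k)).head?).elim 0 h else 0) := by
      intro h
      conv_lhs => rw [hctx]
      rw [sum_map_filterMap, list_range_map_sum]
      refine Finset.sum_congr rfl fun p _ => ?_
      by_cases hcond : (S.drop p).take k = List.ofFn A
      · rw [if_pos hcond, if_pos hcond]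
        cases hh : (S.drop (p + k)).head? with
        | none => simp
        | some a => simp
      · rw [if_neg hcond, if_neg hcond]
        simp
    rw [length_mul_H0, hAstep]
  rw [nHk, Finset.sum_congr rfl (fun A _ => hA A), Finset.sum_comm]
  refine Finset.sum_congr rfl fun p hp => ?_
  cases hh : (S.drop (p + k)).head? with
  | none =>
    simp only [hh, Option.elim_none]
    simp [g, hh]
  | some a =>
    have hne : S.drop (p + k) ≠ [] := by intro h; rw [h] at hh; simp at hh
    have hpk : p + k < S.length := by
      by_contra h
      exact hne (List.drop_eq_nil_of_le (by omega))
    have hlen : ((S.drop p).take k).length = k := by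
      rw [List.length_take, List.length_drop]; omega
    set B : Fin k → Fin σ := fun i => ((S.drop p).take k).get (Fin.cast hlen.symm i) with hB
    have hofB : List.ofFn B = (S.drop p).take k := by
      apply List.ext_getElem
      · simp [hlen]
      · intro i h1 h2
        simp [hB, List.getElem_ofFn]
    have hiff : ∀ A : Fin k → Fin σ, ((S.drop p).take k = List.ofFn A) ↔ A = B := by
      intro A
      constructor
      · intro h
        exact List.ofFn_injective (by rw [hofB, h])
      · intro h
        rw [h, hofB]
    have heach : ∀ A : Fin k → Fin σ,
        (if (S.drop p).take k = List.ofFn A then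
          (Option.some a).elim 0 (fun b =>
            Real.logb 2 (((ctxSub S (List.ofFn A)).length : ℝ) /
              ((ctxSub S (List.ofFn A)).count b : ℝ)))
        else 0)
        = (if A = B then
            (Option.some a).elim 0 (fun b =>
              Real.logb 2 (((ctxSub S (List.ofFn A)).length : ℝ) /
                ((ctxSub S (List.ofFn A)).count b : ℝ)))
          else 0) := by
      intro A
      exact if_congr (hiff A) rfl rfl
    rw [Finset.sum_congr rfl (fun A _ => heach A), Finset.sum_ite_eq',
      if_pos (Finset.mem_univ B), hofB]
    unfold g
    rw [hh]

theorem W_pos_log (S : List (Fin σ)) (k : ℕ) :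
    ∀ (r A : List (Fin σ)) (pos : ℕ), A.length = k →
      (S.drop pos).take (k + r.length) = A ++ r →
      0 < W S A r ∧
        Real.logb 2 (1 / W S A r) = ∑ i ∈ Finset.range r.length, g S k (pos + i) := by
  intro r
  induction r with
  | nil => intro A pos hA h; simp [W]
  | cons a r ih =>
    intro A pos hA h
    have hlen : (S.drop pos).length ≥ k + (r.length + 1) := by
      have hcl := congrArg List.length h
      rw [List.length_take, List.length_append, hA, List.length_cons] at hcl
      rcases Nat.le_total (k + (r.length + 1)) ((S.drop pos).length) with hle | hle
      · omega
      · rw [min_eq_right hle] at hcl; omega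
    have hlenS : pos + k < S.length := by
      rw [List.length_drop] at hlen; omega
    have htakek : (S.drop pos).take k = A := by
      have h2 := congrArg (List.take k) h
      rw [List.take_take, min_eq_left (by omega), List.take_left' hA] at h2
      exact h2
    have hdropk : (S.drop (pos + k)).take (r.length + 1) = a :: r := by
      have h2 := congrArg (List.drop k) h
      rw [List.drop_take, List.drop_drop, List.drop_left' hA] at h2
      rw [show k + (a :: r).length - k = r.length + 1 by simp] at h2
      exact h2
    have hhead : (S.drop (pos + k)).head? = some a := by
      cases hS : S.drop (pos + k) with
      | nil => rw [hS] at hdropk; simp at hdropk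
      | cons b tl =>
        rw [hS] at hdropk
        simp only [List.take_succ_cons, List.cons.injEq] at hdropk
        rw [List.head?_cons, hdropk.1]
    have hmem : a ∈ ctxSub S A := htakek ▸ mem_ctxSub_of_head hhead
    have hcpos : 0 < (ctxSub S A).count a := List.count_pos_iff.2 hmem
    have hcposR : (0 : ℝ) < ((ctxSub S A).count a : ℝ) := by exact_mod_cast hcpos
    have hlposR : (0 : ℝ) < ((ctxSub S A).length : ℝ) := by
      exact_mod_cast lt_of_lt_of_le hcpos (List.count_le_length)
    have hpf : 0 < pf S A a := div_pos hcposR hlposR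
    have hA' : ((A ++ [a]).drop 1).length = k := by
      rw [List.length_drop, List.length_append, hA]; simp
    have hnext : (S.drop (pos + 1)).take (k + r.length) = ((A ++ [a]).drop 1) ++ r := by
      have h2 := congrArg (List.drop 1) h
      rw [List.drop_take, List.drop_drop] at h2
      have h3 : (A ++ a :: r).drop 1 = ((A ++ [a]).drop 1) ++ r := by
        rw [List.append_cons, List.drop_append_of_le_length
          (by rw [List.length_append, hA, List.length_singleton]; omega)]
      rw [h3, show k + (a :: r).length - 1 = k + r.length by simp] at h2
      exact h2
    obtain ⟨hWpos, hWlog⟩ := ih ((A ++ [a]).drop 1) (pos + 1) hA' hnext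
    have hWpos' : 0 < W S A (a :: r) := by
      rw [W]; exact mul_pos hpf hWpos
    refine ⟨hWpos', ?_⟩
    have hg : g S k pos = Real.logb 2 (1 / pf S A a) := by
      rw [g, htakek, hhead]
      simp only [Option.elim_some, pf, one_div_div]
    have hone : (1 : ℝ) / (pf S A a * W S ((A ++ [a]).drop 1) r)
        = (1 / pf S A a) * (1 / W S ((A ++ [a]).drop 1) r) := by
      rw [one_div, mul_inv, one_div, one_div]
    have hmain : Real.logb 2 (1 / W S A (a :: r))
        = g S k pos + ∑ i ∈ Finset.range r.length, g S k (pos + 1 + i) := by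
      conv_lhs => rw [W]
      rw [hone, Real.logb_mul (by positivity) (by positivity), hg, hWlog]
    rw [hmain, List.length_cons, Finset.sum_range_succ', add_comm]
    congr 1
    · exact Finset.sum_congr rfl fun i _ => by rw [show pos + 1 + i = pos + (i + 1) from by omega]


/-- split equivalence for tuples -/
def tse (σ k t : ℕ) : ((Fin k → Fin σ) × (Fin t → Fin σ)) ≃ (Fin (k + t) → Fin σ) :=
  (Equiv.sumArrowEquivProdArrow (Fin k) (Fin t) (Fin σ)).symm.trans
    (Equiv.arrowCongr finSumFinEquiv (Equiv.refl (Fin σ)))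

theorem sum_q_tuples_le (S : List (Fin σ)) (k t : ℕ) (hσ : 0 < σ) :
    ∑ v : Fin (k + t) → Fin σ,
      ((σ : ℝ) ^ k)⁻¹ * W S ((List.ofFn v).take k) ((List.ofFn v).drop k) ≤ 1 := by
  rw [← Equiv.sum_comp (tse σ k t)
    (fun v => ((σ : ℝ) ^ k)⁻¹ * W S ((List.ofFn v).take k) ((List.ofFn v).drop k)),
    Fintype.sum_prod_type]
  have happ : ∀ (u : Fin k → Fin σ) (w : Fin t → Fin σ) (j : Fin (k + t)),
      tse σ k t (u, w) j = Sum.elim u w (finSumFinEquiv.symm j) := fun _ _ _ => rfl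
  have hofn : ∀ (u : Fin k → Fin σ) (w : Fin t → Fin σ),
      List.ofFn (tse σ k t (u, w)) = List.ofFn u ++ List.ofFn w := by
    intro u w
    rw [List.ofFn_add]
    congr 1
    · exact congrArg List.ofFn (funext fun i => by
        rw [happ]; exact congrArg (Sum.elim u w) (finSumFinEquiv_symm_apply_castAdd i))
    · exact congrArg List.ofFn (funext fun i => by
        rw [happ, finSumFinEquiv_symm_apply_natAdd]; rfl)
  have hσR : (0 : ℝ) < (σ : ℝ) ^ k := by positivity
  calc ∑ u : Fin k → Fin σ, ∑ w : Fin t → Fin σ,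
        ((σ : ℝ) ^ k)⁻¹ * W S ((List.ofFn (tse σ k t (u, w))).take k)
          ((List.ofFn (tse σ k t (u, w))).drop k)
      = ∑ u : Fin k → Fin σ, ((σ : ℝ) ^ k)⁻¹ *
          ∑ w : Fin t → Fin σ, W S (List.ofFn u) (List.ofFn w) := by
        refine Finset.sum_congr rfl fun u _ => ?_
        rw [Finset.mul_sum]
        refine Finset.sum_congr rfl fun w _ => ?_
        rw [hofn u w, List.take_left' (by simp), List.drop_left' (by simp)]
    _ ≤ ∑ u : Fin k → Fin σ, ((σ : ℝ) ^ k)⁻¹ * 1 := by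
        refine Finset.sum_le_sum fun u _ => ?_
        exact mul_le_mul_of_nonneg_left (W_sum_le_one S t (List.ofFn u)) (by positivity)
    _ = 1 := by
        rw [Finset.sum_const, Finset.card_univ, Fintype.card_fun, nsmul_eq_mul, mul_one]
        rw [Fintype.card_fin, Fintype.card_fin]
        push_cast
        field_simp

end FVaux

/-- Ferragina–Venturini: let `S^M = S.toChunks ℓ` be the meta-string obtained
by grouping consecutive blocks of `ℓ` symbols of `S` (with `ℓ ∣ |S|`).  Then simultaneously
for all `k ≤ ℓ`, `(n/ℓ)·H_0(S^M) ≤ n·H_k(S) + (n/ℓ)·k·log₂ σ`. -/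
theorem ferragina_venturini {σ : ℕ} (S : List (Fin σ)) (ℓ : ℕ)
    (hℓ : 0 < ℓ) (hdvd : ℓ ∣ S.length) :
    ∀ k ≤ ℓ,
      ((S.toChunks ℓ).length : ℝ) * H0 (S.toChunks ℓ)
        ≤ nHk k S + ((S.toChunks ℓ).length : ℝ) * k * Real.logb 2 σ := by
  intro k hk
  obtain ⟨t, rfl⟩ : ∃ t, ℓ = k + t := ⟨ℓ - k, by omega⟩
  rcases eq_or_ne S [] with rfl | hS
  · rw [FVaux.toChunks_closed hℓ [] (by simp)]
    simp [nHk, ctxSub, H0]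
  have hσ : 0 < σ := by
    obtain ⟨x, xs, rfl⟩ := List.exists_cons_of_ne_nil hS
    exact x.pos
  have hmn : S.length / (k + t) * (k + t) = S.length := Nat.div_mul_cancel hdvd
  set n := S.length with hn
  set m := n / (k + t) with hm
  have hC : S.toChunks (k + t)
      = (List.range m).map (fun i => (S.drop (i * (k + t))).take (k + t)) :=
    FVaux.toChunks_closed hℓ S hdvd
  have hClen : (S.toChunks (k + t)).length = m := by rw [hC]; simp
  have hik : ∀ i, i < m → i * (k + t) + (k + t) ≤ n := by
    intro i hi
    have h1 : (i + 1) * (k + t) ≤ m * (k + t) := Nat.mul_le_mul_right _ hi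
    calc i * (k + t) + (k + t) = (i + 1) * (k + t) := by ring
      _ ≤ m * (k + t) := h1
      _ = n := hmn
  have hchlen : ∀ i, i < m → ((S.drop (i * (k + t))).take (k + t)).length = k + t := by
    intro i hi
    rw [List.length_take, List.length_drop]
    have := hik i hi
    omega
  have hchtakelen : ∀ i, i < m → (((S.drop (i * (k + t))).take (k + t)).take k).length = k := by
    intro i hi
    rw [List.length_take, hchlen i hi]
    omega
  have hchdroplen : ∀ i, i < m → (((S.drop (i * (k + t))).take (k + t)).drop k).length = t := by
    intro i hi
    rw [List.length_drop, hchlen i hi]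
    omega
  have hsplit : ∀ i, i < m →
      (S.drop (i * (k + t))).take (k + (((S.drop (i * (k + t))).take (k + t)).drop k).length)
        = (((S.drop (i * (k + t))).take (k + t)).take k)
          ++ (((S.drop (i * (k + t))).take (k + t)).drop k) := by
    intro i hi
    rw [List.take_append_drop, hchdroplen i hi]
  have hWfact := fun i (hi : i < m) =>
    FVaux.W_pos_log S k (((S.drop (i * (k + t))).take (k + t)).drop k)
      (((S.drop (i * (k + t))).take (k + t)).take k) (i * (k + t))
      (hchtakelen i hi) (hsplit i hi)
  set q : List (Fin σ) → ℝ :=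
    fun c => ((σ : ℝ) ^ k)⁻¹ * FVaux.W S (c.take k) (c.drop k) with hq
  have hqpos : ∀ c ∈ (S.toChunks (k + t)).toFinset, 0 < q c := by
    intro c hc
    rw [List.mem_toFinset, hC, List.mem_map] at hc
    obtain ⟨i, hi, rfl⟩ := hc
    have him : i < m := List.mem_range.1 hi
    exact mul_pos (by positivity) (hWfact i him).1
  have hqsum : ∑ c ∈ (S.toChunks (k + t)).toFinset, q c ≤ 1 := by
    classical
    set tv : List (Fin σ) → (Fin (k + t) → Fin σ) :=
      fun c i => c.getD i ⟨0, hσ⟩ with htv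
    have hofn : ∀ c ∈ (S.toChunks (k + t)).toFinset, List.ofFn (tv c) = c := by
      intro c hc
      rw [List.mem_toFinset, hC, List.mem_map] at hc
      obtain ⟨i, hi, rfl⟩ := hc
      have hcl := hchlen i (List.mem_range.1 hi)
      apply List.ext_getElem
      · simp [hcl]
      · intro j h1 h2
        rw [List.getElem_ofFn]
        show List.getD _ j _ = _
        rw [List.getD_eq_getElem _ _ h2]
    have hinj : ∀ c1 ∈ (S.toChunks (k + t)).toFinset, ∀ c2 ∈ (S.toChunks (k + t)).toFinset,
        tv c1 = tv c2 → c1 = c2 := by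
      intro c1 h1 c2 h2 he
      rw [← hofn c1 h1, ← hofn c2 h2, he]
    have h1 : ∑ v ∈ (S.toChunks (k + t)).toFinset.image tv, q (List.ofFn v)
        = ∑ c ∈ (S.toChunks (k + t)).toFinset, q (List.ofFn (tv c)) :=
      Finset.sum_image hinj
    have h2 : ∑ c ∈ (S.toChunks (k + t)).toFinset, q (List.ofFn (tv c))
        = ∑ c ∈ (S.toChunks (k + t)).toFinset, q c :=
      Finset.sum_congr rfl fun c hc => by rw [hofn c hc]
    have h3 : ∑ v ∈ (S.toChunks (k + t)).toFinset.image tv, q (List.ofFn v)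
        ≤ ∑ v : Fin (k + t) → Fin σ, q (List.ofFn v) :=
      Finset.sum_le_sum_of_subset_of_nonneg (Finset.subset_univ _)
        (fun v _ _ => mul_nonneg (by positivity) (FVaux.W_nonneg S _ _))
    have h4 : ∑ v : Fin (k + t) → Fin σ, q (List.ofFn v) ≤ 1 :=
      FVaux.sum_q_tuples_le S k t hσ
    linarith
  have hgibbs := FVaux.gibbs (S.toChunks (k + t)) q hqpos hqsum
  have hlist : ((S.toChunks (k + t)).map (fun c => Real.logb 2 (1 / q c))).sum
      = ∑ i ∈ Finset.range m,
          Real.logb 2 (1 / q ((S.drop (i * (k + t))).take (k + t))) := by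
    rw [hC, List.map_map]
    exact FVaux.list_range_map_sum m _
  have hper : ∀ i ∈ Finset.range m,
      Real.logb 2 (1 / q ((S.drop (i * (k + t))).take (k + t)))
        = (k : ℝ) * Real.logb 2 σ + ∑ j ∈ Finset.range t, FVaux.g S k (i * (k + t) + j) := by
    intro i hi
    have him := Finset.mem_range.1 hi
    obtain ⟨hWp, hWl⟩ := hWfact i him
    rw [hchdroplen i him] at hWl
    have hrw : 1 / q ((S.drop (i * (k + t))).take (k + t))
        = (σ : ℝ) ^ k * (1 / FVaux.W S (((S.drop (i * (k + t))).take (k + t)).take k)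
            (((S.drop (i * (k + t))).take (k + t)).drop k)) := by
      rw [hq]
      have hσk : ((σ : ℝ) ^ k) ≠ 0 := by positivity
      field_simp
    rw [hrw, Real.logb_mul (by positivity) (by positivity), Real.logb_pow, hWl]
  have hposb : ∑ i ∈ Finset.range m, ∑ j ∈ Finset.range t, FVaux.g S k (i * (k + t) + j)
      ≤ nHk k S := by
    rw [FVaux.nHk_eq]
    have hdiv : ∀ i j, j < t → (i * (k + t) + j) / (k + t) = i := by
      intro i j hj
      rw [mul_comm, Nat.mul_add_div hℓ, Nat.div_eq_of_lt (by omega), Nat.add_zero]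
    have hinj2 : ∀ x ∈ Finset.range m ×ˢ Finset.range t,
        ∀ y ∈ Finset.range m ×ˢ Finset.range t,
        (fun p : ℕ × ℕ => p.1 * (k + t) + p.2) x
          = (fun p : ℕ × ℕ => p.1 * (k + t) + p.2) y → x = y := by
      rintro ⟨i1, j1⟩ hx ⟨i2, j2⟩ hy he
      simp only [Finset.mem_product, Finset.mem_range] at hx hy
      simp only at he
      have d1 : (i1 * (k + t) + j1) / (k + t) = i1 := hdiv i1 j1 hx.2
      have d2 : (i2 * (k + t) + j2) / (k + t) = i2 := hdiv i2 j2 hy.2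
      have hii : i1 = i2 := by rw [← d1, he, d2]
      subst hii
      have : j1 = j2 := by omega
      rw [this]
    have hsub : (Finset.range m ×ˢ Finset.range t).image
        (fun p : ℕ × ℕ => p.1 * (k + t) + p.2) ⊆ Finset.range n := by
      intro p hp
      rw [Finset.mem_image] at hp
      obtain ⟨⟨i, j⟩, hmem, rfl⟩ := hp
      simp only [Finset.mem_product, Finset.mem_range] at hmem
      have := hik i hmem.1
      simp only [Finset.mem_range]
      omega
    calc ∑ i ∈ Finset.range m, ∑ j ∈ Finset.range t, FVaux.g S k (i * (k + t) + j)
        = ∑ p ∈ Finset.range m ×ˢ Finset.range t, FVaux.g S k (p.1 * (k + t) + p.2) :=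
          (Finset.sum_product' _ _ _).symm
      _ = ∑ p ∈ (Finset.range m ×ˢ Finset.range t).image
            (fun p : ℕ × ℕ => p.1 * (k + t) + p.2), FVaux.g S k p :=
          (Finset.sum_image hinj2).symm
      _ ≤ ∑ p ∈ Finset.range n, FVaux.g S k p :=
          Finset.sum_le_sum_of_subset_of_nonneg hsub
            (fun p _ _ => FVaux.g_nonneg S k p)
  calc ((S.toChunks (k + t)).length : ℝ) * H0 (S.toChunks (k + t))
      ≤ ((S.toChunks (k + t)).map (fun c => Real.logb 2 (1 / q c))).sum := hgibbs
    _ = ∑ i ∈ Finset.range m,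
          Real.logb 2 (1 / q ((S.drop (i * (k + t))).take (k + t))) := hlist
    _ = ∑ i ∈ Finset.range m, ((k : ℝ) * Real.logb 2 σ
          + ∑ j ∈ Finset.range t, FVaux.g S k (i * (k + t) + j)) :=
        Finset.sum_congr rfl hper
    _ = (m : ℝ) * ((k : ℝ) * Real.logb 2 σ)
          + ∑ i ∈ Finset.range m, ∑ j ∈ Finset.range t, FVaux.g S k (i * (k + t) + j) := by
        rw [Finset.sum_add_distrib, Finset.sum_const, Finset.card_range, nsmul_eq_mul]
    _ ≤ (m : ℝ) * ((k : ℝ) * Real.logb 2 σ) + nHk k S := by linarith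
    _ = nHk k S + ((S.toChunks (k + t)).length : ℝ) * k * Real.logb 2 σ := by
        rw [hClen]
        ring
end
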